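/- Let A be a finite-dimensional k-algebra with indecomposable idempotents e_1, …, e_m, and let M be a finite-dimensional right A-module such that Me_1 is one-dimensional and generates M. Define θ on simple modules by θ(S_1) = dim_k(M) − 1 and θ(S_i) = −1 for i = 2, …, m. Then M is θ-stable: θ(M'') > 0 for every nonzero proper quotient M ↠ M'' (equivalently θ(M') < 0 = θ(M) for every nonzero proper submodule). -/

import Mathlib

/-!
STATEMENT 14: Let `A` be a finite-dimensional `k`-algebra whose simple modules are
one-dimensional, with complete orthogonal family of indecomposable idempotents
`e₀, …, e_m`, and `M` a finite-dimensional `A`-module such that `M·e₀` is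
one-dimensional and generates `M`. Define `θ` on dimension vectors by
`θ(S₀) = dim_k M − 1` and `θ(S_i) = −1` for `i ≥ 1`, i.e.
`θ(N) = (dim_k M − 1)·dim_k(N e₀) − Σ_{i ≥ 1} dim_k(N e_i)`.
Then `M` is `θ`-stable: `θ(M'') > 0` for every nonzero proper quotient `M ↠ M''`.

(We work with left modules; `e • N` plays the role of `N e`.)
-/

open Module

/-- The `k`-subspace `e·N` of a module `N` cut out by an element `e` of the algebra. -/
def eSpace (k : Type*) [Field k] {A : Type*} [Ring A] [Algebra k A]
    (e : A) (N : Type*) [AddCommGroup N] [Module k N] [Module A N] : Submodule k N :=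
  Submodule.span k (Set.range fun n : N => e • n)

/-- `θ(N) = (d − 1)·dim_k(e₀ N) − Σ_{i ≥ 1} dim_k(e_i N)`, where `d = dim_k M`. -/
noncomputable def thetaDim (k : Type*) [Field k] {A : Type*} [Ring A] [Algebra k A]
    {m : ℕ} (e : Fin (m + 1) → A) (d : ℕ)
    (N : Type*) [AddCommGroup N] [Module k N] [Module A N] : ℤ :=
  ((d : ℤ) - 1) * (finrank k (eSpace k (e 0) N) : ℤ) -
    ∑ i : Fin m, (finrank k (eSpace k (e i.succ) N) : ℤ)

lemma eSpace_eq_range (k : Type*) [Field k] {A : Type*} [Ring A] [Algebra k A]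
    (e : A) (N : Type*) [AddCommGroup N] [Module k N] [Module A N] [SMulCommClass A k N] :
    eSpace k e N = LinearMap.range (DistribMulAction.toLinearMap k N e) := by
  have h : (Set.range fun n : N => e • n)
      = ↑(LinearMap.range (DistribMulAction.toLinearMap k N e)) := by
    ext x
    simp [DistribMulAction.toLinearMap]
  rw [eSpace, h, Submodule.span_eq]

lemma mem_eSpace {k : Type*} [Field k] {A : Type*} [Ring A] [Algebra k A]
    {e : A} {N : Type*} [AddCommGroup N] [Module k N] [Module A N] [SMulCommClass A k N]
    {x : N} : x ∈ eSpace k e N ↔ ∃ n : N, e • n = x := by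
  rw [eSpace_eq_range]
  simp [LinearMap.mem_range, DistribMulAction.toLinearMap]

theorem generated_module_is_theta_stable
    {k : Type*} [Field k] {A : Type*} [Ring A] [Algebra k A] [FiniteDimensional k A]
    {M : Type*} [AddCommGroup M] [Module k M] [Module A M] [IsScalarTower k A M]
    [FiniteDimensional k M]
    {m : ℕ} (e : Fin (m + 1) → A)
    -- complete orthogonal family of idempotents
    (hidem : ∀ i, e i * e i = e i)
    (horth : ∀ i j, i ≠ j → e i * e j = 0)
    (hsum : ∑ i, e i = 1)
    -- `e₀·M` is one-dimensional and generates `M`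
    (hdim : finrank k (eSpace k (e 0) M) = 1)
    (hgen : Submodule.span A (Set.range fun x : M => e 0 • x) = ⊤) :
    ∀ N : Submodule A M, N ≠ ⊥ → N ≠ ⊤ →
      0 < thetaDim k e (finrank k M) (M ⧸ N) := by
  intro N hbot htop
  rw [thetaDim]
  set Q := M ⧸ N
  -- finite dimensionality of Q over k
  have equiv : (M ⧸ N.restrictScalars k) ≃ₗ[k] Q :=
    Submodule.Quotient.restrictScalarsEquiv k N
  have hQfd : FiniteDimensional k Q := Module.Finite.equiv equiv
  -- dim Q < dim M
  have hlt : finrank k Q < finrank k M := by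
    rw [← equiv.finrank_eq]
    have h1 : finrank k (M ⧸ N.restrictScalars k) + finrank k (N.restrictScalars k)
        = finrank k M := Submodule.finrank_quotient_add_finrank _
    have h2 : 0 < finrank k (N.restrictScalars k) := by
      rw [Module.finrank_pos_iff]
      obtain ⟨x, hx, hx0⟩ := Submodule.exists_mem_ne_zero_of_ne_bot hbot
      exact ⟨⟨x, hx⟩, 0, fun h => hx0 (congrArg Subtype.val h)⟩
    omega
  -- e₀ Q ≠ 0
  have ha : 0 < finrank k (eSpace k (e 0) Q) := by
    rw [Module.finrank_pos_iff]
    by_contra h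
    rw [not_nontrivial_iff_subsingleton] at h
    apply htop
    rw [← top_le_iff, ← hgen, Submodule.span_le]
    rintro _ ⟨x, rfl⟩
    have hmem : (Submodule.Quotient.mk (e 0 • x) : Q) ∈ eSpace k (e 0) Q :=
      mem_eSpace.2 ⟨Submodule.Quotient.mk x, by rw [← Submodule.Quotient.mk_smul]⟩
    have h0 : (Submodule.Quotient.mk (e 0 • x) : Q) = 0 :=
      congrArg Subtype.val (h.elim (⟨_, hmem⟩ : eSpace k (e 0) Q) 0)
    exact (Submodule.Quotient.mk_eq_zero N).1 h0
  -- injective map from the product of the e_i Q into Q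
  let g : (∀ i : Fin (m + 1), eSpace k (e i) Q) →ₗ[k] Q :=
    { toFun := fun x => ∑ i, (x i : Q)
      map_add' := by intros; simp [Finset.sum_add_distrib]
      map_smul' := by intros; simp [Finset.smul_sum] }
  have hg : Function.Injective g := by
    rw [injective_iff_map_eq_zero]
    intro x hx
    have key : ∀ j, (x j : Q) = 0 := by
      intro j
      obtain ⟨n, hn⟩ := mem_eSpace.1 (x j).2
      have : e j • (∑ i, (x i : Q)) = (x j : Q) := by
        rw [Finset.smul_sum]
        rw [Finset.sum_eq_single j]
        · rw [← hn, smul_smul, hidem j, hn]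
        · intro i _ hij
          obtain ⟨ni, hni⟩ := mem_eSpace.1 (x i).2
          rw [← hni, smul_smul, horth j i (Ne.symm hij), zero_smul]
        · simp
      have hx' : ∑ i, (x i : Q) = 0 := hx
      rw [hx', smul_zero] at this
      exact this.symm
    ext j
    exact key j
  have hsumle : ∑ i : Fin (m + 1), finrank k (eSpace k (e i) Q) ≤ finrank k Q := by
    have := LinearMap.finrank_le_finrank_of_injective hg
    rwa [finrank_pi_fintype] at this
  rw [Fin.sum_univ_succ] at hsumle
  -- arithmetic
  set a := finrank k (eSpace k (e 0) Q)
  set s := ∑ i : Fin m, finrank k (eSpace k (e i.succ) Q)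
  have hcast : ∑ i : Fin m, (finrank k (eSpace k (e i.succ) Q) : ℤ) = (s : ℤ) := by
    simp [s]
  rw [hcast]
  have h1 : (1 : ℤ) ≤ a := by exact_mod_cast ha
  have h2 : (a : ℤ) + s ≤ finrank k Q := by exact_mod_cast hsumle
  have h3 : (finrank k Q : ℤ) < finrank k M := by exact_mod_cast hlt
  nlinarith
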